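/- arXiv:2509.07144 — 5 statements merged into one kernel-verified Lean document; each statement's English description precedes it below -/
import Mathlib

section
/- Let k ≥ 3 be an integer and let L be a graph with at least 2k+1 vertices. Suppose that every pair of non-adjacent vertices of L has at least 3k−2 common neighbors. Then L is k-linked. -/
open SimpleGraph

/-- `G` is `k`-linked: any `2k` distinct vertices, grouped into `k` pairs, can be joined
by `k` pairwise vertex-disjoint paths. -/
def Linked {V : Type} (G : SimpleGraph V) (k : ℕ) : Prop :=
  ∀ u v : Fin k → V,
    Function.Injective (Sum.elim u v) →
    ∃ P : (i : Fin k) → G.Walk (u i) (v i),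
      (∀ i, (P i).IsPath) ∧
      ∀ i j, i ≠ j → ∀ x ∈ (P i).support, x ∉ (P j).support

/-- `G` is `(2,…,2,1)`-knitted with `k` twos: any `k` pairs of vertices together with one
further vertex `u₀` (all distinct) can be linked by `k` pairwise vertex-disjoint paths,
each avoiding `u₀`. -/
def KnittedOne {V : Type} (G : SimpleGraph V) (k : ℕ) : Prop :=
  ∀ (u₀ : V) (u v : Fin k → V),
    Function.Injective (Sum.elim (Sum.elim u v) (fun _ : Unit => u₀)) →
    ∃ P : (i : Fin k) → G.Walk (u i) (v i),
      (∀ i, (P i).IsPath) ∧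
      (∀ i, u₀ ∉ (P i).support) ∧
      ∀ i j, i ≠ j → ∀ x ∈ (P i).support, x ∉ (P j).support

/-- `H` is a minor of `G`, witnessed by pairwise-disjoint nonempty connected branch sets. -/
def IsMinor {W V : Type} (H : SimpleGraph W) (G : SimpleGraph V) : Prop :=
  ∃ f : W → Set V,
    (∀ w, (f w).Nonempty) ∧
    (∀ w, (G.induce (f w)).Connected) ∧
    (Pairwise fun w w' => Disjoint (f w) (f w')) ∧
    (∀ ⦃w w'⦄, H.Adj w w' → ∃ a ∈ f w, ∃ b ∈ f w', G.Adj a b)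

/-- `H` is a proper minor of `G`. -/
def IsProperMinor {W V : Type} (H : SimpleGraph W) (G : SimpleGraph V) : Prop :=
  IsMinor H G ∧ ¬ IsMinor G H

/-- `G` is `k`-contraction-critical: its chromatic number is `k`, but every proper minor
is `(k-1)`-colorable. -/
def ContractionCritical {V : Type} (k : ℕ) (G : SimpleGraph V) : Prop :=
  G.chromaticNumber = (k : ENat) ∧
  ∀ (W : Type) (H : SimpleGraph W), IsProperMinor H G → H.Colorable (k - 1)

/-- `G` is `t`-connected: more than `t` vertices, and deleting any fewer than `t`
vertices leaves it connected. -/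
def KConnected {V : Type} [Fintype V] (G : SimpleGraph V) (t : ℕ) : Prop :=
  t < Fintype.card V ∧
  ∀ S : Finset V, S.card < t → (G.induce {v : V | v ∉ S}).Connected

/-- Independence number of the subgraph of `G` induced on `S`. -/
noncomputable def alphaOn {V : Type} (G : SimpleGraph V) (S : Set V) : ℕ :=
  sSup {n | ∃ t : Finset V, ↑t ⊆ S ∧ t.card = n ∧
    ∀ a ∈ t, ∀ b ∈ t, a ≠ b → ¬ G.Adj a b}

/-- Number of common neighbors of `a` and `b` in `G`. -/
noncomputable def commonNbrs {V : Type} (G : SimpleGraph V) (a b : V) : ℕ :=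
  {x : V | G.Adj a x ∧ G.Adj b x}.ncard

lemma exists_common_avoiding {V : Type} [Fintype V] (k : ℕ) (hk : 3 ≤ k)
    (L : SimpleGraph V)
    (hcommon : ∀ a b : V, a ≠ b → ¬ L.Adj a b → 3 * k - 2 ≤ commonNbrs L a b)
    (a b : V) (hab : a ≠ b) (hnadj : ¬ L.Adj a b)
    (F : Finset V) (hF : F.card ≤ 3 * k - 1) (haF : a ∈ F) (hbF : b ∈ F) :
    ∃ x, L.Adj a x ∧ L.Adj b x ∧ x ∉ F := by
  classical
  by_contra h
  push_neg at h
  have hsub : {x : V | L.Adj a x ∧ L.Adj b x} ⊆ ↑((F.erase a).erase b) := by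
    intro x hx
    simp only [Finset.coe_erase, Set.mem_diff, Set.mem_singleton_iff]
    exact ⟨⟨h x hx.1 hx.2, fun e => L.ne_of_adj hx.1 e.symm⟩,
      fun e => L.ne_of_adj hx.2 e.symm⟩
  have h1 : {x : V | L.Adj a x ∧ L.Adj b x}.ncard ≤ ((F.erase a).erase b).card := by
    calc {x : V | L.Adj a x ∧ L.Adj b x}.ncard
        ≤ (↑((F.erase a).erase b) : Set V).ncard :=
          Set.ncard_le_ncard hsub (Set.toFinite _)
      _ = ((F.erase a).erase b).card := Set.ncard_coe_finset _
  have hbF' : b ∈ F.erase a := Finset.mem_erase.mpr ⟨fun e => hab e.symm, hbF⟩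
  have h2 : ((F.erase a).erase b).card = F.card - 2 := by
    rw [Finset.card_erase_of_mem hbF', Finset.card_erase_of_mem haF]; omega
  have h3 := hcommon a b hab hnadj
  unfold commonNbrs at h3
  omega

theorem stmt0 {V : Type} [Fintype V] (k : ℕ) (hk : 3 ≤ k) (L : SimpleGraph V)
    (hcard : 2 * k + 1 ≤ Fintype.card V)
    (hcommon : ∀ a b : V, a ≠ b → ¬ L.Adj a b → 3 * k - 2 ≤ commonNbrs L a b) :
    Linked L k := by
  classical
  intro u v hinj
  have hneV : Nonempty V := Fintype.card_pos_iff.mp (by omega)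
  have huu : ∀ i j : Fin k, i ≠ j → u i ≠ u j := by
    intro i j hij e
    exact hij (Sum.inl.inj (hinj (a₁ := Sum.inl i) (a₂ := Sum.inl j) e))
  have hvv : ∀ i j : Fin k, i ≠ j → v i ≠ v j := by
    intro i j hij e
    exact hij (Sum.inr.inj (hinj (a₁ := Sum.inr i) (a₂ := Sum.inr j) e))
  have huv : ∀ i j : Fin k, u i ≠ v j := by
    intro i j e
    exact absurd (hinj (a₁ := Sum.inl i) (a₂ := Sum.inr j) e) (by simp)
  have main : ∀ n : ℕ, ∃ m : Fin k → V, ∀ i : Fin k, (i : ℕ) < n → ¬ L.Adj (u i) (v i) →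
      L.Adj (u i) (m i) ∧ L.Adj (v i) (m i) ∧ (∀ j, m i ≠ u j) ∧ (∀ j, m i ≠ v j) ∧
      ∀ j : Fin k, (j : ℕ) < (i : ℕ) → m i ≠ m j := by
    intro n
    induction n with
    | zero => exact ⟨fun _ => Classical.arbitrary V, fun i h => absurd h (by omega)⟩
    | succ n ih =>
      obtain ⟨m, hm⟩ := ih
      by_cases hn : n < k
      · set i : Fin k := ⟨n, hn⟩ with hidef
        by_cases hadj : L.Adj (u i) (v i)
        · refine ⟨m, fun i' hi' hna => ?_⟩
          by_cases h : (i' : ℕ) < n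
          · exact hm i' h hna
          · have : i' = i := Fin.ext (by simp only [hidef]; omega)
            exact absurd hna (this ▸ not_not_intro hadj)
        · set F : Finset V := (Finset.univ.image u ∪ Finset.univ.image v) ∪
              (Finset.univ.filter (fun j : Fin k => (j : ℕ) < n)).image m with hFdef
          have hfilt : (Finset.univ.filter (fun j : Fin k => (j : ℕ) < n)).card ≤ n := by
            have := Finset.card_le_card_of_injOn (f := fun j : Fin k => (j : ℕ))
              (s := Finset.univ.filter (fun j : Fin k => (j : ℕ) < n))
              (t := Finset.range n)
              (by intro j hj; simp at hj ⊢; exact hj)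
              (fun a _ b _ e => Fin.ext e)
            simpa using this
          have hFcard : F.card ≤ 3 * k - 1 := by
            have h1 := Finset.card_union_le (Finset.univ.image u ∪ Finset.univ.image v)
              ((Finset.univ.filter (fun j : Fin k => (j : ℕ) < n)).image m)
            have h2 := Finset.card_union_le (Finset.univ.image u) (Finset.univ.image v)
            have h3 : (Finset.univ.image u).card ≤ k := by
              simpa using Finset.card_image_le (s := (Finset.univ : Finset (Fin k))) (f := u)
            have h4 : (Finset.univ.image v).card ≤ k := by
              simpa using Finset.card_image_le (s := (Finset.univ : Finset (Fin k))) (f := v)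
            have h5 : ((Finset.univ.filter (fun j : Fin k => (j : ℕ) < n)).image m).card ≤ n :=
              le_trans Finset.card_image_le hfilt
            rw [hFdef]
            omega
          have haF : u i ∈ F :=
            Finset.mem_union_left _ (Finset.mem_union_left _
              (Finset.mem_image_of_mem u (Finset.mem_univ i)))
          have hbF : v i ∈ F :=
            Finset.mem_union_left _ (Finset.mem_union_right _
              (Finset.mem_image_of_mem v (Finset.mem_univ i)))
          obtain ⟨x, hx1, hx2, hx3⟩ := exists_common_avoiding k hk L hcommon (u i) (v i)
            (huv i i) hadj F hFcard haF hbF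
          refine ⟨Function.update m i x, fun i' hi' hna => ?_⟩
          by_cases h : (i' : ℕ) < n
          · have hne : i' ≠ i := by
              intro e; rw [e] at h; simp only [hidef] at h; omega
            rw [Function.update_of_ne hne]
            obtain ⟨a, b, c, d, e⟩ := hm i' h hna
            refine ⟨a, b, c, d, fun j hj => ?_⟩
            have hji : j ≠ i := by
              intro ee; rw [ee] at hj; simp only [hidef] at hj; omega
            rw [Function.update_of_ne hji]
            exact e j hj
          · have hii : i' = i := Fin.ext (by simp only [hidef]; omega)
            subst hii
            have hin : ((⟨n, hn⟩ : Fin k) : ℕ) = n := rfl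
            rw [Function.update_self]
            refine ⟨hx1, hx2, ?_, ?_, ?_⟩
            · intro j e
              exact hx3 (e ▸ Finset.mem_union_left _ (Finset.mem_union_left _
                (Finset.mem_image_of_mem u (Finset.mem_univ j))))
            · intro j e
              exact hx3 (e ▸ Finset.mem_union_left _ (Finset.mem_union_right _
                (Finset.mem_image_of_mem v (Finset.mem_univ j))))
            · intro j hj
              have hji : j ≠ i := by intro e; rw [e] at hj; omega
              rw [Function.update_of_ne hji]
              intro e
              apply hx3
              rw [e]
              refine Finset.mem_union_right _ (Finset.mem_image_of_mem m ?_)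
              simp only [Finset.mem_filter, Finset.mem_univ, true_and]
              omega
      · exact ⟨m, fun i' hi' => hm i' (by omega)⟩
  obtain ⟨m, hm⟩ := main k
  have hgood := fun (i : Fin k) => hm i i.isLt
  have hw : ∀ i : Fin k, ∃ w : L.Walk (u i) (v i), w.IsPath ∧
      ∀ x ∈ w.support, x = u i ∨ x = v i ∨ (¬ L.Adj (u i) (v i) ∧ x = m i) := by
    intro i
    by_cases hadj : L.Adj (u i) (v i)
    · refine ⟨Walk.cons hadj Walk.nil, ?_, ?_⟩
      · simp [Walk.isPath_def, hadj.ne]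
      · intro x hx
        simp only [Walk.support_cons, Walk.support_nil, List.mem_cons,
          List.not_mem_nil, or_false] at hx
        tauto
    · obtain ⟨h1, h2, -, -, -⟩ := hgood i hadj
      refine ⟨Walk.cons h1 (Walk.cons h2.symm Walk.nil), ?_, ?_⟩
      · simp [Walk.isPath_def, h1.ne, h1.ne', h2.ne, h2.ne', huv i i]
      · intro x hx
        simp only [Walk.support_cons, Walk.support_nil, List.mem_cons,
          List.not_mem_nil, or_false] at hx
        tauto
  choose P hP1 hP2 using hw
  refine ⟨P, hP1, ?_⟩
  intro i j hij x hxi hxj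
  rcases hP2 i x hxi with h1 | h1 | ⟨hnai, h1⟩ <;>
    rcases hP2 j x hxj with h2 | h2 | ⟨hnaj, h2⟩
  · exact huu i j hij (h1.symm.trans h2)
  · exact huv i j (h1.symm.trans h2)
  · exact (hgood j hnaj).2.2.1 i (h2.symm.trans h1)
  · exact huv j i (h2.symm.trans h1)
  · exact hvv i j hij (h1.symm.trans h2)
  · exact (hgood j hnaj).2.2.2.1 i (h2.symm.trans h1)
  · exact (hgood i hnai).2.2.1 j (h1.symm.trans h2)
  · exact (hgood i hnai).2.2.2.1 j (h1.symm.trans h2)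
  · rcases lt_or_gt_of_ne (fun e : (i : ℕ) = (j : ℕ) => hij (Fin.ext e)) with hlt | hlt
    · exact (hgood j hnaj).2.2.2.2 i hlt (h2.symm.trans h1)
    · exact (hgood i hnai).2.2.2.2 j hlt (h1.symm.trans h2)
end

section
/- Let k ≥ 3 be an integer and let L be a graph with at least 2k+1 vertices. Suppose that every pair of non-adjacent vertices of L has at least 3k−1 common neighbors. Then for every choice of 2k+1 distinct vertices u_0, u_1, v_1, ..., u_k, v_k there exist k vertex-disjoint paths P_1, ..., P_k, each avoiding u_0, such that P_i joins u_i to v_i. -/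
open SimpleGraph

lemma pick_distinct {V : Type} [DecidableEq V] [Nonempty V] :
    ∀ (n : ℕ) (D : Fin n → Finset V) (P : Fin n → Prop) [DecidablePred P],
    (∀ i, P i → n ≤ (D i).card) →
    ∃ w : Fin n → V, (∀ i, P i → w i ∈ D i) ∧
      ∀ i j, i ≠ j → P i → P j → w i ≠ w j := by
  intro n
  induction n with
  | zero => intro D P _ _; exact ⟨Fin.elim0, fun i => i.elim0, fun i => i.elim0⟩
  | succ n ih =>
    intro D P _ hcard
    obtain ⟨w', hw'mem, hw'inj⟩ := ih (fun i => D i.succ) (fun i => P i.succ)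
      (fun i hi => le_trans (Nat.le_succ n) (hcard i.succ hi))
    set T : Finset V := (Finset.univ.filter (fun i : Fin n => P i.succ)).image w' with hT
    have hTcard : T.card ≤ n := le_trans Finset.card_image_le
      (le_trans (Finset.card_filter_le _ _) (by simp))
    by_cases h0 : P 0
    · have hne : (D 0 \ T).Nonempty := by
        rw [← Finset.card_pos]
        have h1 : (D 0).card ≤ (D 0 \ T).card + T.card :=
          Finset.card_le_card_sdiff_add_card
        have h2 := hcard 0 h0
        omega
      obtain ⟨w0, hw0⟩ := hne
      rw [Finset.mem_sdiff] at hw0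
      refine ⟨Fin.cons w0 w', ?_, ?_⟩
      · intro i hi
        induction i using Fin.cases with
        | zero => simpa using hw0.1
        | succ i => simpa using hw'mem i hi
      · intro i j hij hi hj
        induction i using Fin.cases with
        | zero =>
          induction j using Fin.cases with
          | zero => exact absurd rfl hij
          | succ j =>
            simp only [Fin.cons_zero, Fin.cons_succ]
            intro h
            exact hw0.2 (h ▸ Finset.mem_image_of_mem w' (by simpa using hj))
        | succ i =>
          induction j using Fin.cases with
          | zero =>
            simp only [Fin.cons_zero, Fin.cons_succ]
            intro h
            exact hw0.2 (h ▸ Finset.mem_image_of_mem w' (by simpa using hi))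
          | succ j =>
            simp only [Fin.cons_succ]
            exact hw'inj i j (by simpa [Fin.succ_inj] using hij) hi hj
    · refine ⟨Fin.cons (Classical.arbitrary V) w', ?_, ?_⟩
      · intro i hi
        induction i using Fin.cases with
        | zero => exact absurd hi h0
        | succ i => simpa using hw'mem i hi
      · intro i j hij hi hj
        induction i using Fin.cases with
        | zero => exact absurd hi h0
        | succ i =>
          induction j using Fin.cases with
          | zero => exact absurd hj h0
          | succ j =>
            simp only [Fin.cons_succ]
            exact hw'inj i j (by simpa [Fin.succ_inj] using hij) hi hj

theorem stmt1 {V : Type} [Fintype V] (k : ℕ) (hk : 3 ≤ k) (L : SimpleGraph V)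
    (hcard : 2 * k + 1 ≤ Fintype.card V)
    (hcommon : ∀ a b : V, a ≠ b → ¬ L.Adj a b → 3 * k - 1 ≤ commonNbrs L a b) :
    KnittedOne L k := by
  classical
  have hne : Nonempty V := Fintype.card_pos_iff.mp (by omega)
  intro u₀ u v hinj
  -- basic disequalities
  have huv : ∀ i j, u i ≠ v j := fun i j h => by
    have := hinj (a₁ := Sum.inl (Sum.inl i)) (a₂ := Sum.inl (Sum.inr j)) (by simpa using h)
    simp at this
  have huu : ∀ i j, i ≠ j → u i ≠ u j := fun i j hij h => by
    have := hinj (a₁ := Sum.inl (Sum.inl i)) (a₂ := Sum.inl (Sum.inl j)) (by simpa using h)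
    simp only [Sum.inl.injEq] at this
    exact hij this
  have hvv : ∀ i j, i ≠ j → v i ≠ v j := fun i j hij h => by
    have := hinj (a₁ := Sum.inl (Sum.inr i)) (a₂ := Sum.inl (Sum.inr j)) (by simpa using h)
    simp only [Sum.inl.injEq, Sum.inr.injEq] at this
    exact hij this
  have h0u : ∀ i, u₀ ≠ u i := fun i h => by
    have := hinj (a₁ := Sum.inr ()) (a₂ := Sum.inl (Sum.inl i)) (by simpa using h)
    simp at this
  have h0v : ∀ i, u₀ ≠ v i := fun i h => by
    have := hinj (a₁ := Sum.inr ()) (a₂ := Sum.inl (Sum.inr i)) (by simpa using h)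
    simp at this
  -- common-neighbor finsets
  set C : Fin k → Finset V :=
    fun i => Finset.univ.filter (fun x => L.Adj (u i) x ∧ L.Adj (v i) x) with hC
  set F : Finset V := insert u₀ (Finset.univ.image u ∪ Finset.univ.image v) with hF
  have hFcard : F.card ≤ 2 * k + 1 := by
    calc F.card ≤ (Finset.univ.image u ∪ Finset.univ.image v).card + 1 :=
          Finset.card_insert_le _ _
      _ ≤ ((Finset.univ.image u).card + (Finset.univ.image v).card) + 1 := by
          have := Finset.card_union_le (Finset.univ.image u) (Finset.univ.image v)
          omega
      _ ≤ (k + k) + 1 := by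
          have h1 : (Finset.univ.image u).card ≤ k := by
            simpa using Finset.card_image_le (s := (Finset.univ : Finset (Fin k))) (f := u)
          have h2 : (Finset.univ.image v).card ≤ k := by
            simpa using Finset.card_image_le (s := (Finset.univ : Finset (Fin k))) (f := v)
          omega
      _ = 2 * k + 1 := by ring
  have hCcard : ∀ i, ¬ L.Adj (u i) (v i) → 3 * k - 1 ≤ (C i).card := by
    intro i hnadj
    have h := hcommon (u i) (v i) (huv i i) hnadj
    rwa [commonNbrs, show {x : V | L.Adj (u i) x ∧ L.Adj (v i) x} = ↑(C i) by
      simp [hC, Finset.coe_filter], Set.ncard_coe_finset] at h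
  have hDcard : ∀ i, ¬ L.Adj (u i) (v i) → k ≤ (C i \ F).card := by
    intro i hnadj
    set F' : Finset V := (F.erase (u i)).erase (v i) with hF'
    have huiF : u i ∈ F := by simp [hF]
    have hviF' : v i ∈ F.erase (u i) :=
      Finset.mem_erase.mpr ⟨Ne.symm (huv i i), by simp [hF]⟩
    have hF'card : F'.card ≤ 2 * k - 1 := by
      rw [hF', Finset.card_erase_of_mem hviF', Finset.card_erase_of_mem huiF]
      omega
    have hsub : C i \ F' ⊆ C i \ F := by
      intro x hx
      rw [Finset.mem_sdiff] at hx ⊢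
      refine ⟨hx.1, fun hxF => ?_⟩
      have hxC := hx.1
      rw [hC, Finset.mem_filter] at hxC
      have hxu : x ≠ u i := fun h => L.irrefl (h ▸ hxC.2.1)
      have hxv : x ≠ v i := fun h => L.irrefl (h ▸ hxC.2.2)
      exact hx.2 (Finset.mem_erase.mpr ⟨hxv, Finset.mem_erase.mpr ⟨hxu, hxF⟩⟩)
    have h1 : (C i).card ≤ (C i \ F').card + F'.card :=
      Finset.card_le_card_sdiff_add_card
    have h2 := hCcard i hnadj
    have h3 := Finset.card_le_card hsub
    omega
  -- pick distinct midpoints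
  obtain ⟨w, hwmem, hwinj⟩ := pick_distinct k (fun i => C i \ F)
    (fun i => ¬ L.Adj (u i) (v i)) hDcard
  have hwC : ∀ i (h : ¬ L.Adj (u i) (v i)), L.Adj (u i) (w i) ∧ L.Adj (v i) (w i) := by
    intro i h
    have := hwmem i h
    rw [Finset.mem_sdiff, hC, Finset.mem_filter] at this
    exact this.1.2
  have hwF : ∀ i (h : ¬ L.Adj (u i) (v i)), w i ∉ F := by
    intro i h
    have := hwmem i h
    rw [Finset.mem_sdiff] at this
    exact this.2
  have hw0 : ∀ i (h : ¬ L.Adj (u i) (v i)), w i ≠ u₀ := by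
    intro i h he
    exact hwF i h (by simp [hF, he])
  have hwu : ∀ i j (h : ¬ L.Adj (u i) (v i)), w i ≠ u j := by
    intro i j h he
    exact hwF i h (by simp [hF]; right; left; exact ⟨j, he.symm⟩)
  have hwv : ∀ i j (h : ¬ L.Adj (u i) (v i)), w i ≠ v j := by
    intro i j h he
    exact hwF i h (by simp [hF]; right; right; exact ⟨j, he.symm⟩)
  -- the paths
  refine ⟨fun i =>
      if h : L.Adj (u i) (v i) then Walk.cons h Walk.nil
      else Walk.cons (hwC i h).1 (Walk.cons ((hwC i h).2).symm Walk.nil), ?_, ?_, ?_⟩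
  · intro i
    by_cases h : L.Adj (u i) (v i)
    · dsimp only; rw [dif_pos h]
      simp [Walk.isPath_def, huv i i]
    · dsimp only; rw [dif_neg h]
      simp [Walk.isPath_def, huv i i, (hwu i i h).symm, hwv i i h]
  · intro i
    by_cases h : L.Adj (u i) (v i)
    · dsimp only; rw [dif_pos h]
      simp [Walk.support_cons, h0u i, h0v i]
    · dsimp only; rw [dif_neg h]
      simp [Walk.support_cons]
      exact ⟨h0u i, fun he => hw0 i h he.symm, h0v i⟩
  · intro i j hij x hxi hxj
    have hsi : x = u i ∨ x = v i ∨ (¬ L.Adj (u i) (v i) ∧ x = w i) := by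
      by_cases h : L.Adj (u i) (v i)
      · dsimp only at hxi; rw [dif_pos h] at hxi; simp [Walk.support_cons] at hxi; tauto
      · dsimp only at hxi; rw [dif_neg h] at hxi; simp [Walk.support_cons] at hxi; tauto
    have hsj : x = u j ∨ x = v j ∨ (¬ L.Adj (u j) (v j) ∧ x = w j) := by
      by_cases h : L.Adj (u j) (v j)
      · dsimp only at hxj; rw [dif_pos h] at hxj; simp [Walk.support_cons] at hxj; tauto
      · dsimp only at hxj; rw [dif_neg h] at hxj; simp [Walk.support_cons] at hxj; tauto
    rcases hsi with h1 | h1 | ⟨hna1, h1⟩ <;> rcases hsj with h2 | h2 | ⟨hna2, h2⟩ <;>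
      subst h1
    · exact huu i j hij h2
    · exact huv i j h2
    · exact (hwu j i hna2) h2.symm
    · exact huv j i h2.symm
    · exact hvv i j hij h2
    · exact (hwv j i hna2) h2.symm
    · exact hwu i j hna1 h2
    · exact hwv i j hna1 h2
    · exact hwinj i j hij hna1 hna2 h2
end

section
/- Let k ≥ 3 and let L be a graph with |V(L)| ≥ 2k+1. Suppose every set of k pairs of distinct vertices of L can be labeled (u_1,v_1), ..., (u_k,v_k) so that for every i ∈ {1,...,k}, either u_i v_i is an edge of L or u_i and v_i have at least 2k−2+i common neighbors. Then L is k-linked. -/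
open SimpleGraph

theorem stmt2 {V : Type} [Fintype V] (k : ℕ) (hk : 3 ≤ k) (L : SimpleGraph V)
    (hcard : 2 * k + 1 ≤ Fintype.card V)
    (hpairs : ∀ u v : Fin k → V, Function.Injective (Sum.elim u v) →
      ∃ σ : Equiv.Perm (Fin k), ∀ i : Fin k,
        L.Adj (u (σ i)) (v (σ i)) ∨
          2 * k - 2 + (i.val + 1) ≤ commonNbrs L (u (σ i)) (v (σ i))) :
    Linked L k := by
  intro u v hinj
  haveI : Nonempty V := Fintype.card_pos_iff.mp (by omega)
  obtain ⟨σ, hσ⟩ := hpairs u v hinj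
  -- injectivity facts
  have hu : ∀ a b : Fin k, u a = u b → a = b := fun a b h => by
    have := hinj (a₁ := Sum.inl a) (a₂ := Sum.inl b) h
    exact Sum.inl.inj this
  have hv : ∀ a b : Fin k, v a = v b → a = b := fun a b h => by
    have := hinj (a₁ := Sum.inr a) (a₂ := Sum.inr b) h
    exact Sum.inr.inj this
  have huv : ∀ a b : Fin k, u a ≠ v b := fun a b h => by
    have := hinj (a₁ := Sum.inl a) (a₂ := Sum.inr b) h
    simp at this
  set C : Fin k → Set V := fun i => {x : V | L.Adj (u (σ i)) x ∧ L.Adj (v (σ i)) x} with hC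
  -- choice step
  have step : ∀ (i : Fin k) (g : Fin k → V), ¬ L.Adj (u (σ i)) (v (σ i)) →
      ∃ x, x ∈ C i ∧ (∀ a, x ≠ u a) ∧ (∀ a, x ≠ v a) ∧ ∀ j, j < i → x ≠ g j := by
    intro i g hna
    have hcn : 2 * k - 2 + (i.val + 1) ≤ (C i).ncard := (hσ i).resolve_left hna
    set T : Set V := (Set.range u ∪ Set.range v) \ {u (σ i), v (σ i)} with hT
    set G : Set V := g '' {j : Fin k | j < i} with hG
    have hTcard : T.ncard = 2 * k - 2 := by
      have hrange : (Set.range u ∪ Set.range v).ncard = 2 * k := by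
        rw [← Set.Sum.elim_range, ← Set.image_univ,
          Set.ncard_image_of_injective _ hinj, Set.ncard_univ]
        simp [Nat.card_eq_fintype_card, two_mul]
      rw [hT, Set.ncard_diff (by
        intro x hx
        rcases hx with h | h
        · exact Or.inl ⟨σ i, h.symm⟩
        · exact Or.inr ⟨σ i, h.symm⟩)]
      rw [hrange, Set.ncard_pair (huv _ _)]
    have hGcard : G.ncard ≤ i.val := by
      refine le_trans (Set.ncard_image_le (Set.toFinite _)) ?_
      have : {j : Fin k | j < i} = ↑(Finset.Iio i) := by ext j; simp
      rw [this, Set.ncard_coe_finset, Fin.card_Iio]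
    have hsub : C i ∩ (Set.range u ∪ Set.range v ∪ G) ⊆ T ∪ G := by
      rintro x ⟨hx, hmem | hmem⟩
      · left
        refine ⟨hmem, ?_⟩
        intro h
        rcases h with h | h
        · subst h; exact L.irrefl hx.1
        · subst h; exact L.irrefl hx.2
      · exact Or.inr hmem
    have hinter : (C i ∩ (Set.range u ∪ Set.range v ∪ G)).ncard ≤ 2 * k - 2 + i.val := by
      calc (C i ∩ (Set.range u ∪ Set.range v ∪ G)).ncard
          ≤ (T ∪ G).ncard := Set.ncard_le_ncard hsub (Set.toFinite _)
        _ ≤ T.ncard + G.ncard := Set.ncard_union_le _ _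
        _ ≤ 2 * k - 2 + i.val := by rw [hTcard]; omega
    have hdiff : 0 < (C i \ (Set.range u ∪ Set.range v ∪ G)).ncard := by
      have h1 := Set.ncard_le_ncard_diff_add_ncard (C i)
        (C i ∩ (Set.range u ∪ Set.range v ∪ G)) (Set.toFinite _)
      have h2 : C i \ (C i ∩ (Set.range u ∪ Set.range v ∪ G))
          = C i \ (Set.range u ∪ Set.range v ∪ G) := by
        ext x; simp only [Set.mem_diff, Set.mem_inter_iff]; tauto
      rw [h2] at h1
      omega
    obtain ⟨x, hx1, hx2⟩ := Set.nonempty_of_ncard_ne_zero (s := C i \ (Set.range u ∪ Set.range v ∪ G)) (Nat.pos_iff_ne_zero.mp hdiff)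
    refine ⟨x, hx1, ?_, ?_, ?_⟩
    · intro a h; exact hx2 (Or.inl (Or.inl ⟨a, h.symm⟩))
    · intro a h; exact hx2 (Or.inl (Or.inr ⟨a, h.symm⟩))
    · intro j hj h; exact hx2 (Or.inr ⟨j, hj, h.symm⟩)
  -- build midpoints by recursion
  have build : ∀ n : ℕ, n ≤ k → ∃ g : Fin k → V, ∀ i : Fin k, i.val < n →
      ¬ L.Adj (u (σ i)) (v (σ i)) →
      g i ∈ C i ∧ (∀ a, g i ≠ u a) ∧ (∀ a, g i ≠ v a) ∧ ∀ j, j < i → g i ≠ g j := by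
    intro n
    induction n with
    | zero => exact fun _ => ⟨fun _ => Classical.arbitrary V, fun i h => absurd h (by omega)⟩
    | succ n ih =>
      intro hn
      obtain ⟨g, hg⟩ := ih (by omega)
      set i₀ : Fin k := ⟨n, by omega⟩ with hi₀
      by_cases hadj : L.Adj (u (σ i₀)) (v (σ i₀))
      · refine ⟨g, fun i hi hna => ?_⟩
        rcases Nat.lt_succ_iff_lt_or_eq.mp hi with h | h
        · exact hg i h hna
        · exact absurd hadj ((Fin.ext (show i.val = i₀.val from h) : i = i₀) ▸ hna)
      · obtain ⟨x, hx1, hx2, hx3, hx4⟩ := step i₀ g hadj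
        refine ⟨Function.update g i₀ x, fun i hi hna => ?_⟩
        rcases Nat.lt_succ_iff_lt_or_eq.mp hi with h | h
        · have hne : i ≠ i₀ := by intro he; rw [he] at h; exact Nat.lt_irrefl n h
          rw [Function.update_of_ne hne]
          obtain ⟨p1, p2, p3, p4⟩ := hg i h hna
          refine ⟨p1, p2, p3, fun j hj hje => ?_⟩
          have hjne : j ≠ i₀ := by
            intro he; rw [he] at hj
            have := hj; simp only [hi₀] at this
            have : i.val < n := h
            have : (i₀ : Fin k).val = n := rfl
            omega
          rw [Function.update_of_ne hjne] at hje
          exact p4 j hj hje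
        · have hii : i = i₀ := Fin.ext (show i.val = i₀.val from h)
          rw [hii, Function.update_self]
          refine ⟨hx1, hx2, hx3, fun j hj hje => ?_⟩
          have hjne : j ≠ i₀ := Fin.ne_of_lt hj
          rw [Function.update_of_ne hjne] at hje
          exact hx4 j hj hje
  obtain ⟨g, hg⟩ := build k le_rfl
  have hg' : ∀ i : Fin k, ¬ L.Adj (u (σ i)) (v (σ i)) →
      g i ∈ C i ∧ (∀ a, g i ≠ u a) ∧ (∀ a, g i ≠ v a) ∧ ∀ j, j < i → g i ≠ g j :=
    fun i => hg i i.isLt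
  -- per-pair path with support characterization
  have key : ∀ j : Fin k, ∃ P : L.Walk (u j) (v j), P.IsPath ∧
      (P.support = [u j, v j] ∨
        (¬ L.Adj (u j) (v j) ∧ P.support = [u j, g (σ.symm j), v j])) := by
    intro j
    by_cases hadj : L.Adj (u j) (v j)
    · exact ⟨Walk.cons hadj Walk.nil, by simp [Walk.isPath_def, hadj.ne], Or.inl (by simp)⟩
    · have hna : ¬ L.Adj (u (σ (σ.symm j))) (v (σ (σ.symm j))) := by
        rw [σ.apply_symm_apply]; exact hadj
      obtain ⟨hmem, hne_u, hne_v, _⟩ := hg' (σ.symm j) hna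
      have h1 : L.Adj (u j) (g (σ.symm j)) := by
        have := hmem.1; rwa [σ.apply_symm_apply] at this
      have h2 : L.Adj (v j) (g (σ.symm j)) := by
        have := hmem.2; rwa [σ.apply_symm_apply] at this
      refine ⟨Walk.cons h1 (Walk.cons h2.symm Walk.nil), ?_, Or.inr ⟨hadj, by simp⟩⟩
      have n1 : u j ≠ g (σ.symm j) := fun he => hne_u j he.symm
      have n2 : u j ≠ v j := huv j j
      have n3 : g (σ.symm j) ≠ v j := hne_v j
      simp [Walk.isPath_def, n1, n2, n3]
  choose P hP1 hP2 using key
  refine ⟨P, hP1, ?_⟩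
  -- disjointness
  intro a b hab x hxa hxb
  -- characterize membership
  have mem_char : ∀ (c : Fin k) (y : V), y ∈ (P c).support →
      y = u c ∨ y = v c ∨ (¬ L.Adj (u c) (v c) ∧ y = g (σ.symm c)) := by
    intro c y hy
    rcases hP2 c with h | ⟨hna, h⟩
    · rw [h] at hy; simp at hy; tauto
    · rw [h] at hy; simp at hy; tauto
  have hwa := mem_char a x hxa
  have hwb := mem_char b x hxb
  -- distinctness of g-values across distinct indices (both nonadjacent)
  have hgg : ∀ c d : Fin k, c ≠ d → ¬ L.Adj (u (σ (σ.symm c))) (v (σ (σ.symm c))) →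
      ¬ L.Adj (u (σ (σ.symm d))) (v (σ (σ.symm d))) → g (σ.symm c) ≠ g (σ.symm d) := by
    intro c d hcd hnc hnd
    have hsne : σ.symm c ≠ σ.symm d := fun h => hcd (by
      have := congrArg σ h; rwa [σ.apply_symm_apply, σ.apply_symm_apply] at this)
    rcases lt_or_gt_of_ne hsne with h | h
    · exact fun he => (hg' (σ.symm d) hnd).2.2.2 (σ.symm c) h he.symm
    · exact (hg' (σ.symm c) hnc).2.2.2 (σ.symm d) h
  have hinj2 : ∀ c d : Fin k, c ≠ d → u c ≠ u d := fun c d h he => h (hu c d he)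
  have hinj3 : ∀ c d : Fin k, c ≠ d → v c ≠ v d := fun c d h he => h (hv c d he)
  have hsymm : ∀ c : Fin k, ¬ L.Adj (u c) (v c) →
      ¬ L.Adj (u (σ (σ.symm c))) (v (σ (σ.symm c))) := by
    intro c hc; rwa [σ.apply_symm_apply]
  rcases hwa with h1 | h1 | ⟨hna, h1⟩ <;> rcases hwb with h2 | h2 | ⟨hnb, h2⟩ <;>
    subst h1
  · exact hinj2 a b hab h2
  · exact huv a b h2
  · exact ((hg' (σ.symm b) (hsymm b hnb)).2.1 a) h2.symm
  · exact huv b a h2.symm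
  · exact hinj3 a b hab h2
  · exact ((hg' (σ.symm b) (hsymm b hnb)).2.2.1 a) h2.symm
  · exact ((hg' (σ.symm a) (hsymm a hna)).2.1 b) h2
  · exact ((hg' (σ.symm a) (hsymm a hna)).2.2.1 b) h2
  · exact hgg a b hab (hsymm a hna) (hsymm b hnb) h2
end

section
/- If G is a k-contraction-critical graph, then for every vertex u of G the independence number of the subgraph induced on the neighborhood N(u) is at most d(u) − k + 2. -/
open SimpleGraph

section Aux

lemma card_le_of_isMinor {W V : Type} [Fintype W] [Fintype V]
    (G : SimpleGraph V) (H : SimpleGraph W) (h : IsMinor G H) :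
    Fintype.card V ≤ Fintype.card W := by
  obtain ⟨f, hne, -, hdisj, -⟩ := h
  choose g hg using hne
  have hinj : Function.Injective g := by
    intro a b hab
    by_contra hne'
    exact Set.disjoint_left.mp (hdisj hne') (hg a) (hab ▸ hg b)
  exact Fintype.card_le_of_injective g hinj

lemma induce_connected_of_star {V : Type} (G : SimpleGraph V) (u : V) (s : Set V)
    (hu : u ∈ s) (hadj : ∀ v ∈ s, v ≠ u → G.Adj u v) : (G.induce s).Connected := by
  rw [SimpleGraph.connected_iff]
  refine ⟨?_, ⟨⟨u, hu⟩⟩⟩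
  have key : ∀ a : s, (G.induce s).Reachable a ⟨u, hu⟩ := by
    rintro ⟨a, ha⟩
    by_cases h : a = u
    · subst h; exact SimpleGraph.Reachable.refl _
    · refine SimpleGraph.Adj.reachable ?_
      show G.Adj a u
      exact (hadj a ha h).symm
  intro a b
  exact (key a).trans (key b).symm

lemma not_colorable_pred {V : Type} (k : ℕ) (G : SimpleGraph V)
    (hchi : G.chromaticNumber = (k : ENat)) (hk : 3 ≤ k) : ¬ G.Colorable (k - 1) := by
  intro hc
  have h1 := hc.chromaticNumber_le
  rw [hchi] at h1
  have h2 : k ≤ k - 1 := by exact_mod_cast h1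
  omega

end Aux

theorem stmt3 {V : Type} [Fintype V] (k : ℕ) (G : SimpleGraph V)
    (hG : ContractionCritical k G) (u : V) :
    (alphaOn G (G.neighborSet u) : ℤ) ≤ ((G.neighborSet u).ncard : ℤ) - (k : ℤ) + 2 := by
  classical
  obtain ⟨hchi, hmin⟩ := hG
  set N : Set V := G.neighborSet u with hN
  set S : Set ℕ := {n | ∃ t : Finset V, ↑t ⊆ N ∧ t.card = n ∧
    ∀ a ∈ t, ∀ b ∈ t, a ≠ b → ¬ G.Adj a b} with hS
  have halpha : alphaOn G N = sSup S := rfl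
  have hSne : S.Nonempty := ⟨0, ∅, by simp⟩
  have hNcard : N.ncard = (G.neighborFinset u).card := by
    rw [← Set.ncard_coe_finset, neighborFinset_def, Set.coe_toFinset]
  have hBdd : BddAbove S := by
    refine ⟨N.ncard, ?_⟩
    rintro n ⟨t, hts, hcard, -⟩
    rw [← hcard, ← Set.ncard_coe_finset t]
    exact Set.ncard_le_ncard hts (Set.toFinite N)
  have hle : alphaOn G N ≤ N.ncard := by
    rw [halpha]
    exact csSup_le hSne (by rintro n ⟨t, hts, hcard, -⟩
                            rw [← hcard, ← Set.ncard_coe_finset t]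
                            exact Set.ncard_le_ncard hts (Set.toFinite N))
  by_contra hcon
  push_neg at hcon
  -- hcon : (N.ncard : ℤ) - k + 2 < alphaOn G N
  have hk3 : 3 ≤ k := by omega
  obtain ⟨I, hIsub, hIcard, hIind⟩ : sSup S ∈ S := Nat.sSup_mem hSne hBdd
  have huI : u ∉ (↑I : Set V) := fun h => G.loopless.irrefl u (hIsub h)
  have hGcol : ¬ G.Colorable (k - 1) := not_colorable_pred k G hchi hk3
  apply hGcol
  rcases I.eq_empty_or_nonempty with hIe | ⟨i₀, hi₀⟩
  · -- alpha = 0, so N is empty; delete u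
    have halpha0 : sSup S = 0 := by rw [← hIcard, hIe]; simp
    have hNe : ∀ v, v ∉ N := by
      intro v hv
      have h1 : (1 : ℕ) ∈ S := ⟨{v}, by simpa using hv, by simp, by
        intro a ha b hb hab
        simp only [Finset.mem_singleton] at ha hb
        exact absurd (ha.trans hb.symm) hab⟩
      have h2 := le_csSup hBdd h1
      omega
    -- the proper minor: G with u deleted
    set H : SimpleGraph {v : V // v ≠ u} := G.induce {v : V | v ≠ u} with hH
    have hproper : IsProperMinor H G := by
      constructor
      · refine ⟨fun w => {(w : V)}, fun w => ⟨w, rfl⟩, ?_, ?_, ?_⟩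
        · intro w
          exact induce_connected_of_star G w {(w : V)} rfl
            (by rintro v rfl h; exact absurd rfl h)
        · intro a b hab
          simp only [Set.disjoint_singleton_left, Set.mem_singleton_iff]
          exact fun h => hab (Subtype.ext h)
        · intro a b hab
          exact ⟨a, rfl, b, rfl, hab⟩
      · intro hM
        have hlt : Fintype.card {v : V // v ≠ u} < Fintype.card V := by
          refine Fintype.card_lt_of_injective_of_notMem Subtype.val Subtype.val_injective
            (b := u) ?_
          rintro ⟨w, hwu⟩
          exact w.2 hwu
        exact absurd (card_le_of_isMinor G H hM) (not_le.mpr hlt)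
    obtain ⟨C⟩ := hmin _ H hproper
    refine ⟨⟨fun v => if h : v = u then ⟨0, by omega⟩ else C ⟨v, h⟩, ?_⟩⟩
    intro x y hxy
    by_cases hx : x = u
    · exact absurd (hx ▸ hxy : G.Adj u y) (hNe y)
    · by_cases hy : y = u
      · exact absurd (hy ▸ hxy : G.Adj x u).symm (hNe x)
      · simp only [hx, hy, dif_neg, not_false_iff]
        exact C.valid (by exact hxy : H.Adj ⟨x, hx⟩ ⟨y, hy⟩)
  · -- main case: contract {u} ∪ I
    set s : Set V := insert u ↑I with hs
    have hbr : ∀ w : {v : V // v ∉ (↑I : Set V)}, Set V :=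
      fun w => if (w : V) = u then s else {(w : V)}
    set W := {v : V // v ∉ (↑I : Set V)} with hW
    let f : W → Set V := fun w => if (w : V) = u then s else {(w : V)}
    let H : SimpleGraph W :=
      { Adj := fun a b => a ≠ b ∧ ∃ x ∈ f a, ∃ y ∈ f b, G.Adj x y
        symm := ⟨by
          rintro a b ⟨hne, x, hx, y, hy, hxy⟩
          exact ⟨hne.symm, y, hy, x, hx, hxy.symm⟩⟩
        loopless := ⟨fun a h => h.1 rfl⟩ }
    have hadjI : ∀ v ∈ (↑I : Set V), G.Adj u v := fun v hv => hIsub hv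
    have hproper : IsProperMinor H G := by
      constructor
      · refine ⟨f, ?_, ?_, ?_, ?_⟩
        · intro w
          by_cases h : (w : V) = u
          · simp only [f, h, if_pos rfl]; exact ⟨u, Set.mem_insert u _⟩
          · exact ⟨w, by simp [f, h]⟩
        · intro w
          by_cases h : (w : V) = u
          · have hfw : f w = s := by simp only [f]; rw [if_pos h]
            rw [hfw]
            refine induce_connected_of_star G u s (Set.mem_insert u _) ?_
            intro v hv hvu
            rcases hv with rfl | hv
            · exact absurd rfl hvu
            · exact hadjI v hv
          · have hfw : f w = {(w : V)} := by simp only [f]; rw [if_neg h]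
            rw [hfw]
            exact induce_connected_of_star G w {(w : V)} rfl
              (by rintro v rfl hvw; exact absurd rfl hvw)
        · intro a b hab
          have hvals : (a : V) = (b : V) → False := fun h => hab (Subtype.ext h)
          by_cases ha : (a : V) = u <;> by_cases hb : (b : V) = u
          · exact absurd (ha.trans hb.symm) (fun h => hvals h)
          · simp only [f, if_pos ha, if_neg hb, Set.disjoint_singleton_right]
            rintro (h | h)
            · exact hb h
            · exact b.2 h
          · simp only [f, if_neg ha, if_pos hb, Set.disjoint_singleton_left]
            rintro (h | h)
            · exact ha h
            · exact a.2 h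
          · simp only [f, if_neg ha, if_neg hb, Set.disjoint_singleton_left,
              Set.mem_singleton_iff]
            exact fun h => hvals h
        · rintro a b ⟨-, hx⟩
          exact hx
      · intro hM
        have hlt : Fintype.card W < Fintype.card V := by
          refine Fintype.card_lt_of_injective_of_notMem Subtype.val Subtype.val_injective
            (b := i₀) ?_
          rintro ⟨w, hwi⟩
          exact w.2 (by rw [hwi]; exact_mod_cast hi₀)
        exact absurd (card_le_of_isMinor G H hM) (not_le.mpr hlt)
    obtain ⟨C⟩ := hmin W H hproper
    set uW : W := ⟨u, huI⟩ with huW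
    set b : V → Fin (k - 1) :=
      fun v => if hv : v ∈ (↑I : Set V) then C uW else C ⟨v, hv⟩ with hb
    set T : Finset V := G.neighborFinset u with hT
    have hIT : I ⊆ T := by
      intro v hv
      rw [hT, mem_neighborFinset]
      exact hIsub hv
    -- counting
    have hcount : (T.image b).card < k - 1 := by
      have hsub : T.image b ⊆ insert (C uW) ((T \ I).image b) := by
        intro x hx
        simp only [Finset.mem_image] at hx
        obtain ⟨v, hv, rfl⟩ := hx
        by_cases hvI : v ∈ I
        · simp only [Finset.mem_insert]
          left
          simp [hb, hvI]
        · refine Finset.mem_insert_of_mem ?_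
          exact Finset.mem_image_of_mem b (Finset.mem_sdiff.mpr ⟨hv, hvI⟩)
      have h1 : (T.image b).card ≤ 1 + (T \ I).card := by
        calc (T.image b).card ≤ (insert (C uW) ((T \ I).image b)).card :=
              Finset.card_le_card hsub
          _ ≤ 1 + ((T \ I).image b).card := by
              rw [add_comm]; exact Finset.card_insert_le _ _
          _ ≤ 1 + (T \ I).card := by
              exact Nat.add_le_add_left (Finset.card_image_le) 1
      have h2 : (T \ I).card = T.card - I.card := Finset.card_sdiff_of_subset hIT
      have h3 : I.card ≤ T.card := Finset.card_le_card hIT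
      have h4 : T.card = N.ncard := hNcard.symm
      have h5 : I.card = alphaOn G N := by rw [halpha, hIcard]
      omega
    obtain ⟨col, hcol⟩ : ∃ col : Fin (k - 1), col ∉ T.image b := by
      by_contra hc
      push_neg at hc
      have := Finset.eq_univ_of_forall hc
      rw [this, Finset.card_univ, Fintype.card_fin] at hcount
      omega
    refine ⟨⟨fun v => if v = u then col else b v, ?_⟩⟩
    intro x y hxy
    show (if x = u then col else b x) ≠ (if y = u then col else b y)
    have hbmem : ∀ v, G.Adj u v → b v ∈ T.image b := by
      intro v hv
      exact Finset.mem_image_of_mem b ((mem_neighborFinset G u v).mpr hv)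
    by_cases hx : x = u
    · have hy : y ≠ u := fun h => hxy.ne (hx.trans h.symm)
      have hadjuy : G.Adj u y := by rw [← hx]; exact hxy
      rw [if_pos hx, if_neg hy]
      intro h
      exact hcol (by rw [h]; exact hbmem y hadjuy)
    · by_cases hy : y = u
      · have hadjux : G.Adj u x := by rw [← hy]; exact hxy.symm
        rw [if_neg hx, if_pos hy]
        intro h
        exact hcol (by rw [← h]; exact hbmem x hadjux)
      · rw [if_neg hx, if_neg hy]
        by_cases hxI : x ∈ (↑I : Set V) <;> by_cases hyI : y ∈ (↑I : Set V)
        · exact absurd hxy (hIind x hxI y hyI hxy.ne)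
        · have hfu : f uW = s := by simp [f, huW]
          have hfy : f ⟨y, hyI⟩ = {y} := by simp only [f]; rw [if_neg hy]
          have hadjH : H.Adj uW ⟨y, hyI⟩ := by
            refine ⟨fun h => hy (congrArg Subtype.val h).symm, x, ?_, y, ?_, hxy⟩
            · rw [hfu]; exact Set.mem_insert_of_mem u hxI
            · rw [hfy]; rfl
          simp only [b, dif_pos hxI, dif_neg hyI]
          exact C.valid hadjH
        · have hfu : f uW = s := by simp [f, huW]
          have hfx : f ⟨x, hxI⟩ = {x} := by simp only [f]; rw [if_neg hx]
          have hadjH : H.Adj uW ⟨x, hxI⟩ := by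
            refine ⟨fun h => hx (congrArg Subtype.val h).symm, y, ?_, x, ?_, hxy.symm⟩
            · rw [hfu]; exact Set.mem_insert_of_mem u hyI
            · rw [hfx]; rfl
          simp only [b, dif_neg hxI, dif_pos hyI]
          exact C.valid hadjH.symm
        · have hfx : f ⟨x, hxI⟩ = {x} := by simp only [f]; rw [if_neg hx]
          have hfy : f ⟨y, hyI⟩ = {y} := by simp only [f]; rw [if_neg hy]
          have hadjH : H.Adj ⟨x, hxI⟩ ⟨y, hyI⟩ := by
            refine ⟨fun h => hxy.ne (congrArg Subtype.val h), x, ?_, y, ?_, hxy⟩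
            · rw [hfx]; rfl
            · rw [hfy]; rfl
          simp only [b, dif_neg hxI, dif_neg hyI]
          exact C.valid hadjH
end

section
/- Let k ≥ 3 and let L be a graph with |V(L)| ≥ 2k+1. Suppose there is a vertex v ∈ V(L) such that every vertex x ∉ N[v] has at least 2k−1 common neighbors with v, and every pair of non-adjacent vertices x, y both different from v has at least 3k−2 common neighbors. Then L is k-linked. -/
open SimpleGraph

lemma exists_avoid {V : Type} [Fintype V] [DecidableEq V] (N : Set V) (B : Finset V) (a b : V)
    (ha : a ∈ B) (hb : b ∈ B) (hab : a ≠ b) (haN : a ∉ N) (hbN : b ∉ N)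
    (hcard : B.card ≤ N.ncard + 1) : ∃ x ∈ N, x ∉ B := by
  by_contra h
  push_neg at h
  have hsub : N ⊆ ↑((B.erase a).erase b) := by
    intro x hx
    simp only [Finset.coe_erase, Set.mem_diff, Set.mem_singleton_iff]
    refine ⟨⟨h x hx, fun hxa => haN (hxa ▸ hx)⟩, fun hxb => hbN (hxb ▸ hx)⟩
  have h1 : N.ncard ≤ ((B.erase a).erase b).card := by
    rw [← Set.ncard_coe_finset]
    exact Set.ncard_le_ncard hsub (Set.toFinite _)
  have hbmem : b ∈ B.erase a := Finset.mem_erase.2 ⟨hab.symm, hb⟩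
  have h2 : ((B.erase a).erase b).card = B.card - 2 := by
    rw [Finset.card_erase_of_mem hbmem, Finset.card_erase_of_mem ha]
    omega
  have h3 : 2 ≤ B.card := by
    have : ({a, b} : Finset V) ⊆ B := by
      intro x hx; simp at hx; rcases hx with rfl | rfl <;> assumption
    have := Finset.card_le_card this
    rwa [Finset.card_pair hab] at this
  omega

lemma exists_middles {V : Type} [Fintype V] (k : ℕ) (hk : 3 ≤ k) (L : SimpleGraph V)
    (v : V)
    (h1 : ∀ x : V, x ≠ v → ¬ L.Adj v x → 2 * k - 1 ≤ commonNbrs L v x)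
    (h2 : ∀ x y : V, x ≠ y → x ≠ v → y ≠ v → ¬ L.Adj x y →
      3 * k - 2 ≤ commonNbrs L x y)
    (u w : Fin k → V) (hinj : Function.Injective (Sum.elim u w))
    (s : Finset (Fin k)) :
    ∃ m : Fin k → V,
      (∀ i ∈ s, ¬ L.Adj (u i) (w i) →
        L.Adj (u i) (m i) ∧ L.Adj (w i) (m i) ∧ (∀ j, m i ≠ u j ∧ m i ≠ w j)) ∧
      (∀ i ∈ s, ∀ j ∈ s, i ≠ j → ¬ L.Adj (u i) (w i) → ¬ L.Adj (u j) (w j) →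
        m i ≠ m j) := by
  classical
  have huw : ∀ i j, u i ≠ w j := by
    intro i j h
    have := hinj (show Sum.elim u w (.inl i) = Sum.elim u w (.inr j) from h)
    simp at this
  have hu : Function.Injective u := by
    intro i j h
    have := hinj (show Sum.elim u w (.inl i) = Sum.elim u w (.inl j) from h)
    simpa using this
  have hw : Function.Injective w := by
    intro i j h
    have := hinj (show Sum.elim u w (.inr i) = Sum.elim u w (.inr j) from h)
    simpa using this
  induction s using Finset.strongInduction with
  | _ s ih =>
  rcases s.eq_empty_or_nonempty with rfl | hne
  · exact ⟨fun _ => v, by simp, by simp⟩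
  set E : Finset V := Finset.image u Finset.univ ∪ Finset.image w Finset.univ with hE
  have hEcard : E.card ≤ 2 * k := by
    calc E.card ≤ (Finset.image u Finset.univ).card + (Finset.image w Finset.univ).card :=
          Finset.card_union_le _ _
      _ ≤ k + k := by
          gcongr <;> exact (Finset.card_image_le).trans (by simp)
      _ = 2 * k := by ring
  by_cases hns : ∃ i ∈ s, u i ≠ v ∧ w i ≠ v
  · obtain ⟨i, his, hui, hwi⟩ := hns
    obtain ⟨m, hm1, hm2⟩ := ih (s.erase i) (Finset.erase_ssubset his)
    by_cases hadj : L.Adj (u i) (w i)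
    · refine ⟨m, ?_, ?_⟩
      · intro i' hi' hna
        rcases eq_or_ne i' i with rfl | hne'
        · exact absurd hadj hna
        · exact hm1 i' (Finset.mem_erase.2 ⟨hne', hi'⟩) hna
      · intro i' hi' j' hj' hij hna hna'
        rcases eq_or_ne i' i with rfl | h1'
        · exact absurd hadj hna
        rcases eq_or_ne j' i with rfl | h2'
        · exact absurd hadj hna'
        exact hm2 i' (Finset.mem_erase.2 ⟨h1', hi'⟩) j' (Finset.mem_erase.2 ⟨h2', hj'⟩) hij hna hna'
    · -- pick a middle for i
      set N : Set V := {x | L.Adj (u i) x ∧ L.Adj (w i) x} with hN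
      set B : Finset V := E ∪ (s.erase i).image m with hB
      have hNcard : 3 * k - 2 ≤ N.ncard :=
        h2 (u i) (w i) (huw i i) hui hwi hadj
      have hBcard : B.card ≤ N.ncard + 1 := by
        have : B.card ≤ E.card + (s.erase i).card := by
          calc B.card ≤ E.card + ((s.erase i).image m).card := Finset.card_union_le _ _
            _ ≤ E.card + (s.erase i).card := by gcongr; exact Finset.card_image_le
        have herase : (s.erase i).card ≤ k - 1 := by
          have : (s.erase i).card ≤ (Finset.univ.erase i).card :=
            Finset.card_le_card (Finset.erase_subset_erase _ (Finset.subset_univ s))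
          simpa [Finset.card_erase_of_mem] using this
        omega
      obtain ⟨x, hxN, hxB⟩ := exists_avoid N B (u i) (w i)
        (by simp [hB, hE]) (by simp [hB, hE]) (huw i i)
        (by simp [hN, L.irrefl]) (by intro hx; exact (L.irrefl hx.2)) hBcard
      refine ⟨Function.update m i x, ?_, ?_⟩
      · intro i' hi' hna
        rcases eq_or_ne i' i with rfl | hne'
        · rw [Function.update_self]
          refine ⟨hxN.1, hxN.2, ?_⟩
          intro j
          constructor
          · intro hxu; exact hxB (by simp [hB, hE, hxu])
          · intro hxw; exact hxB (by simp [hB, hE]; right; left; exact ⟨j, hxw.symm⟩)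
        · rw [Function.update_of_ne hne']
          exact hm1 i' (Finset.mem_erase.2 ⟨hne', hi'⟩) hna
      · intro i' hi' j' hj' hij hna hna'
        have key : ∀ j'' , j'' ∈ s.erase i → x ≠ m j'' := by
          intro j'' hj'' hxm
          apply hxB
          rw [hB]
          exact Finset.mem_union_right _ (Finset.mem_image.2 ⟨j'', hj'', hxm.symm⟩)
        rcases eq_or_ne i' i with rfl | h1'
        · rw [Function.update_self, Function.update_of_ne (Ne.symm hij)]
          exact key j' (Finset.mem_erase.2 ⟨Ne.symm hij, hj'⟩)
        rcases eq_or_ne j' i with rfl | h2'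
        · rw [Function.update_self, Function.update_of_ne h1']
          exact fun hh => key i' (Finset.mem_erase.2 ⟨h1', hi'⟩) hh.symm
        rw [Function.update_of_ne h1', Function.update_of_ne h2']
        exact hm2 i' (Finset.mem_erase.2 ⟨h1', hi'⟩) j' (Finset.mem_erase.2 ⟨h2', hj'⟩) hij hna hna'
  · -- all elements of s are "special"; s is a singleton
    push_neg at hns
    have hns' : ∀ i ∈ s, u i = v ∨ w i = v := by
      intro i hi
      by_cases h : u i = v
      · exact Or.inl h
      · exact Or.inr (hns i hi h)
    obtain ⟨i0, hi0⟩ := hne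
    have hsing : ∀ i ∈ s, i = i0 := by
      intro i hi
      rcases hns' i hi with hiu | hiw <;> rcases hns' i0 hi0 with h0u | h0w
      · exact hu (hiu.trans h0u.symm)
      · exact absurd (hiu.trans h0w.symm) (huw i i0)
      · exact absurd (h0u.trans hiw.symm) (huw i0 i)
      · exact hw (hiw.trans h0w.symm)
    by_cases hadj : L.Adj (u i0) (w i0)
    · refine ⟨fun _ => v, ?_, ?_⟩
      · intro i hi hna
        rw [hsing i hi] at hna
        exact absurd hadj hna
      · intro i hi j hj hij _ _
        exact absurd ((hsing i hi).trans (hsing j hj).symm) hij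
    · set N : Set V := {x | L.Adj (u i0) x ∧ L.Adj (w i0) x} with hN
      have hNcard : 2 * k - 1 ≤ N.ncard := by
        rcases hns' i0 hi0 with h0u | h0w
        · have := h1 (w i0) (h0u ▸ (huw i0 i0).symm) (h0u ▸ hadj)
          rw [commonNbrs] at this
          rwa [hN, h0u]
        · have := h1 (u i0) (h0w ▸ (huw i0 i0)) (by rw [h0w] at hadj; intro hx; exact hadj hx.symm)
          rw [commonNbrs] at this
          have heq : {x | L.Adj v x ∧ L.Adj (u i0) x} = N := by
            rw [hN, h0w]; ext z; exact and_comm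
          rwa [heq] at this
      have hBcard : E.card ≤ N.ncard + 1 := by omega
      obtain ⟨x, hxN, hxE⟩ := exists_avoid N E (u i0) (w i0)
        (by simp [hE]) (by simp [hE]) (huw i0 i0)
        (by simp [hN, L.irrefl]) (by intro hx; exact (L.irrefl hx.2)) hBcard
      refine ⟨fun _ => x, ?_, ?_⟩
      · intro i hi hna
        have := hsing i hi; subst this
        refine ⟨hxN.1, hxN.2, ?_⟩
        intro j
        constructor
        · intro hxu; exact hxE (by simp [hE, hxu])
        · intro hxw; exact hxE (by simp [hE]; right; exact ⟨j, hxw.symm⟩)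
      · intro i hi j hj hij _ _
        exact absurd ((hsing i hi).trans (hsing j hj).symm) hij

theorem stmt18 {V : Type} [Fintype V] (k : ℕ) (hk : 3 ≤ k) (L : SimpleGraph V)
    (hcard : 2 * k + 1 ≤ Fintype.card V) (v : V)
    (h1 : ∀ x : V, x ≠ v → ¬ L.Adj v x → 2 * k - 1 ≤ commonNbrs L v x)
    (h2 : ∀ x y : V, x ≠ y → x ≠ v → y ≠ v → ¬ L.Adj x y →
      3 * k - 2 ≤ commonNbrs L x y) :
    Linked L k := by
  intro u w hinj
  classical
  obtain ⟨m, hm1, hm2⟩ := exists_middles k hk L v h1 h2 u w hinj Finset.univ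
  have huw : ∀ i j, u i ≠ w j := by
    intro i j h
    have := hinj (show Sum.elim u w (.inl i) = Sum.elim u w (.inr j) from h)
    simp at this
  have hu : Function.Injective u := by
    intro i j h
    have := hinj (show Sum.elim u w (.inl i) = Sum.elim u w (.inl j) from h)
    simpa using this
  have hw : Function.Injective w := by
    intro i j h
    have := hinj (show Sum.elim u w (.inr i) = Sum.elim u w (.inr j) from h)
    simpa using this
  have hW : ∀ i : Fin k, ∃ p : L.Walk (u i) (w i), p.IsPath ∧
      ∀ x ∈ p.support, x = u i ∨ x = w i ∨ (¬ L.Adj (u i) (w i) ∧ x = m i) := by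
    intro i
    by_cases h : L.Adj (u i) (w i)
    · refine ⟨Walk.cons h Walk.nil, ?_, ?_⟩
      · simp [Walk.cons_isPath_iff, h.ne]
      · intro x hx; simp at hx; tauto
    · obtain ⟨ha1, ha2, _⟩ := hm1 i (Finset.mem_univ i) h
      refine ⟨Walk.cons ha1 (Walk.cons ha2.symm Walk.nil), ?_, ?_⟩
      · simp [Walk.cons_isPath_iff, ha1.ne, ha2.ne', huw i i, ha2.ne]
      · intro x hx; simp at hx; tauto
  choose P hPath hSupp using hW
  refine ⟨P, hPath, ?_⟩
  intro i j hij x hxi hxj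
  have hmi := fun h => (hm1 i (Finset.mem_univ i) h).2.2
  have hmj := fun h => (hm1 j (Finset.mem_univ j) h).2.2
  have hx1 := hSupp i x hxi
  have hx2 := hSupp j x hxj
  rcases hx1 with h1' | h1' | ⟨hnai, h1'⟩ <;> rcases hx2 with h2' | h2' | ⟨hnaj, h2'⟩
  · exact hij (hu (h1'.symm.trans h2'))
  · exact huw i j (h1'.symm.trans h2')
  · exact (hmj hnaj i).1 (h2'.symm.trans h1')
  · exact huw j i (h2'.symm.trans h1')
  · exact hij (hw (h1'.symm.trans h2'))
  · exact (hmj hnaj i).2 (h2'.symm.trans h1')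
  · exact (hmi hnai j).1 (h1'.symm.trans h2')
  · exact (hmi hnai j).2 (h1'.symm.trans h2')
  · exact hm2 i (Finset.mem_univ i) j (Finset.mem_univ j) hij hnai hnaj (h1'.symm.trans h2')
end
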